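/- arXiv:1403.2092 — 5 statements merged into one kernel-verified Lean document; each statement's English description precedes it below -/
import Mathlib

section
/- If A, B, C, D are iid discrete random variables taking values in a finite set Ω, then Pr{A = B ∧ C = D} ≤ Pr{A = B = C}. -/
open MeasureTheory ProbabilityTheory Finset

theorem triple_vs_two_doubles {Ω' : Type*} [MeasurableSpace Ω']
    (μ : Measure Ω') [IsProbabilityMeasure μ]
    {Ω : Type*} [Fintype Ω] [MeasurableSpace Ω] [MeasurableSingletonClass Ω]
    (X : Fin 4 → Ω' → Ω) (hmeas : ∀ i, Measurable (X i))
    (hindep : iIndepFun X μ)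
    (hident : ∀ i j, IdentDistrib (X i) (X j) μ μ) :
    μ {ω | X 0 ω = X 1 ω ∧ X 2 ω = X 3 ω} ≤
      μ {ω | X 0 ω = X 1 ω ∧ X 1 ω = X 2 ω} := by
  classical
  set p : Ω → ENNReal := fun x => μ (X 0 ⁻¹' {x}) with hp
  have hpi : ∀ i x, μ (X i ⁻¹' {x}) = p x := by
    intro i x
    rw [hp]
    exact ((hident i 0).measure_mem_eq (MeasurableSet.singleton x))
  have hprod : ∀ (T : Fin 4 → Set Ω), (∀ i, MeasurableSet (T i)) →
      μ (⋂ i, X i ⁻¹' T i) = ∏ i, μ (X i ⁻¹' T i) := by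
    intro T hT
    exact hindep.meas_iInter (fun i => ⟨T i, hT i, rfl⟩)
  have hL : μ {ω | X 0 ω = X 1 ω ∧ X 2 ω = X 3 ω}
      = ∑ r : Ω × Ω, p r.1 * p r.1 * (p r.2 * p r.2) := by
    have hset : {ω | X 0 ω = X 1 ω ∧ X 2 ω = X 3 ω}
        = ⋃ r : Ω × Ω, ⋂ i, X i ⁻¹' (![({r.1} : Set Ω), {r.1}, {r.2}, {r.2}] i) := by
      ext ω
      simp only [Set.mem_setOf_eq, Set.mem_iUnion, Set.mem_iInter, Set.mem_preimage]
      constructor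
      · rintro ⟨h01, h23⟩
        exact ⟨(X 0 ω, X 2 ω), by intro i; fin_cases i <;> simp [h01, h23]⟩
      · rintro ⟨r, hr⟩
        have h0 := hr 0; have h1 := hr 1; have h2 := hr 2; have h3 := hr 3
        simp at h0 h1 h2 h3
        exact ⟨h0.trans h1.symm, h2.trans h3.symm⟩
    rw [hset, measure_iUnion]
    · rw [tsum_fintype]
      congr 1
      ext r
      rw [hprod _ (fun i => by fin_cases i <;> exact measurableSet_singleton _)]
      rw [Fin.prod_univ_four]
      simp only [Matrix.cons_val_zero, Matrix.cons_val_one, Matrix.head_cons,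
        Matrix.cons_val_two, Matrix.tail_cons, Matrix.cons_val_three, hpi]
      ring
    · intro r s hrs
      simp only [Function.onFun, Set.disjoint_left]
      intro ω hω hω'
      simp only [Set.mem_iInter, Set.mem_preimage] at hω hω'
      apply hrs
      have h0 := hω 0; have h0' := hω' 0; have h2 := hω 2; have h2' := hω' 2
      simp at h0 h0' h2 h2'
      exact Prod.ext (h0.symm.trans h0') (h2.symm.trans h2')
    · intro r
      exact MeasurableSet.iInter fun i =>
        (hmeas i) (by fin_cases i <;> exact measurableSet_singleton _)
  have hR : μ {ω | X 0 ω = X 1 ω ∧ X 1 ω = X 2 ω}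
      = ∑ x : Ω, p x * p x * p x := by
    have hset : {ω | X 0 ω = X 1 ω ∧ X 1 ω = X 2 ω}
        = ⋃ x : Ω, ⋂ i, X i ⁻¹' (![({x} : Set Ω), {x}, {x}, Set.univ] i) := by
      ext ω
      simp only [Set.mem_setOf_eq, Set.mem_iUnion, Set.mem_iInter, Set.mem_preimage]
      constructor
      · rintro ⟨h01, h12⟩
        exact ⟨X 0 ω, by intro i; fin_cases i <;> simp [h01, h12]⟩
      · rintro ⟨x, hx⟩
        have h0 := hx 0; have h1 := hx 1; have h2 := hx 2
        simp at h0 h1 h2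
        exact ⟨h0.trans h1.symm, h1.trans h2.symm⟩
    rw [hset, measure_iUnion]
    · rw [tsum_fintype]
      congr 1
      ext x
      rw [hprod _ (fun i => by
        fin_cases i <;> first | exact measurableSet_singleton _ | exact MeasurableSet.univ)]
      rw [Fin.prod_univ_four]
      simp only [Matrix.cons_val_zero, Matrix.cons_val_one, Matrix.head_cons,
        Matrix.cons_val_two, Matrix.tail_cons, Matrix.cons_val_three, hpi,
        Set.preimage_univ, measure_univ, mul_one]
    · intro x y hxy
      simp only [Function.onFun, Set.disjoint_left]
      intro ω hω hω'
      simp only [Set.mem_iInter, Set.mem_preimage] at hω hω'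
      apply hxy
      have h0 := hω 0; have h0' := hω' 0
      simp at h0 h0'
      exact h0.symm.trans h0'
    · intro x
      exact MeasurableSet.iInter fun i => (hmeas i) (by
        fin_cases i <;> first | exact measurableSet_singleton _ | exact MeasurableSet.univ)
  rw [hL, hR]
  have hsum1 : ∑ x : Ω, p x = 1 := by
    have h : μ (⋃ x : Ω, X 0 ⁻¹' {x}) = 1 := by
      rw [show (⋃ x : Ω, X 0 ⁻¹' {x}) = Set.univ from by ext ω; simp]
      exact measure_univ
    rw [measure_iUnion (fun x y hxy => by
        simp only [Function.onFun, Set.disjoint_left]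
        intro ω hω hω'
        simp at hω hω'
        exact hxy (hω.symm.trans hω'))
      (fun x => (hmeas 0) (measurableSet_singleton _)), tsum_fintype] at h
    exact h
  have hLsq : ∑ r : Ω × Ω, p r.1 * p r.1 * (p r.2 * p r.2)
      = (∑ x : Ω, p x * p x) * (∑ x : Ω, p x * p x) := by
    rw [Finset.sum_mul_sum, ← Finset.sum_product']
    rfl
  rw [hLsq]
  have hfin : ∀ x, p x ≠ ⊤ := fun x => measure_ne_top μ _
  set q : Ω → NNReal := fun x => (p x).toNNReal with hq
  have hpq : ∀ x, p x = (q x : ENNReal) := fun x => (ENNReal.coe_toNNReal (hfin x)).symm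
  have hq1 : ∑ x : Ω, q x = 1 := by
    have h := hsum1
    simp only [hpq] at h
    rw [← ENNReal.coe_finset_sum] at h
    exact_mod_cast h
  have key : (∑ x : Ω, q x * q x) * (∑ x : Ω, q x * q x) ≤ ∑ x : Ω, q x * q x * q x := by
    have cs := Finset.sum_mul_sq_le_sq_mul_sq Finset.univ
      (fun x => NNReal.sqrt (q x)) (fun x => q x * NNReal.sqrt (q x))
    have h1 : ∀ x : Ω, NNReal.sqrt (q x) * (q x * NNReal.sqrt (q x)) = q x * q x := by
      intro x
      rw [show NNReal.sqrt (q x) * (q x * NNReal.sqrt (q x))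
          = q x * (NNReal.sqrt (q x) * NNReal.sqrt (q x)) from by ring,
        NNReal.mul_self_sqrt]
    have h2 : ∀ x : Ω, (NNReal.sqrt (q x)) ^ 2 = q x := fun x => NNReal.sq_sqrt _
    have h3 : ∀ x : Ω, (q x * NNReal.sqrt (q x)) ^ 2 = q x * q x * q x := by
      intro x
      rw [mul_pow, NNReal.sq_sqrt]
      ring
    simp only [h1, h2, h3, hq1, one_mul] at cs
    calc (∑ x : Ω, q x * q x) * (∑ x : Ω, q x * q x)
        = (∑ x : Ω, q x * q x) ^ 2 := (sq _).symm
      _ ≤ ∑ x : Ω, q x * q x * q x := cs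
  simp only [hpq]
  exact_mod_cast key
end

section
/- The function d(p) = −4p^4 + 8p^3 − 5p^2 + p attains its maximum value 1/16 on [0,1] exactly at p = 1/2 + 1/(2√2) and p = 1/2 − 1/(2√2). -/
theorem advantage_max (p : ℝ) (hp : p ∈ Set.Icc (0 : ℝ) 1) :
    -4 * p ^ 4 + 8 * p ^ 3 - 5 * p ^ 2 + p ≤ 1 / 16 ∧
      (-4 * p ^ 4 + 8 * p ^ 3 - 5 * p ^ 2 + p = 1 / 16 ↔
        p = 1 / 2 + 1 / (2 * Real.sqrt 2) ∨ p = 1 / 2 - 1 / (2 * Real.sqrt 2)) := by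
  have hs : Real.sqrt 2 ^ 2 = 2 := Real.sq_sqrt (by norm_num)
  have hs0 : Real.sqrt 2 > 0 := Real.sqrt_pos.mpr (by norm_num)
  have hval : 1 / (2 * Real.sqrt 2) = Real.sqrt 2 / 4 := by
    field_simp
    nlinarith
  constructor
  · nlinarith [sq_nonneg (2*p^2 - 2*p + 1/4)]
  constructor
  · intro h
    have hq : 2*p^2 - 2*p + 1/4 = 0 := by nlinarith [sq_nonneg (2*p^2 - 2*p + 1/4)]
    have hfac : (p - (1/2 + Real.sqrt 2/4)) * (p - (1/2 - Real.sqrt 2/4)) = 0 := by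
      nlinarith
    rcases mul_eq_zero.mp hfac with h'|h'
    · left; rw [hval]; linarith
    · right; rw [hval]; linarith
  · rintro (h|h) <;> subst h <;> rw [hval] <;> nlinarith
end

section
/- For any probability vector (p_i)_{i∈Ω} on a finite set Ω with ∑_{i∈Ω} p_i(1−p_i) > 0, we have (∑_{i∈Ω} p_i^2(1−p_i)) / (∑_{i∈Ω} p_i(1−p_i)) ≤ ∑_{i∈Ω} p_i^2. -/
theorem conditional_match_le {Ω : Type*} [Fintype Ω] (p : Ω → ℝ)
    (hp : ∀ i, 0 ≤ p i) (hsum : ∑ i, p i = 1)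
    (hpos : 0 < ∑ i, p i * (1 - p i)) :
    (∑ i, (p i) ^ 2 * (1 - p i)) / (∑ i, p i * (1 - p i)) ≤ ∑ i, (p i) ^ 2 := by
  have key : (∑ i, (p i) ^ 2) ^ 2 ≤ (∑ i, p i) * (∑ i, (p i) ^ 3) := by
    have h := Finset.sum_mul_sq_le_sq_mul_sq Finset.univ
      (fun i => Real.sqrt (p i)) (fun i => p i * Real.sqrt (p i))
    have e1 : ∀ i : Ω, Real.sqrt (p i) * (p i * Real.sqrt (p i)) = (p i) ^ 2 := by
      intro i
      have := Real.mul_self_sqrt (hp i)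
      ring_nf
      nlinarith [this]
    have e2 : ∀ i : Ω, Real.sqrt (p i) ^ 2 = p i := fun i => Real.sq_sqrt (hp i)
    have e3 : ∀ i : Ω, (p i * Real.sqrt (p i)) ^ 2 = (p i) ^ 3 := by
      intro i
      have := Real.sq_sqrt (hp i)
      ring_nf
      nlinarith [this, hp i]
    simp only [e1, e2, e3] at h
    exact h
  rw [div_le_iff₀ hpos]
  have h1 : ∑ i, (p i) ^ 2 * (1 - p i) = (∑ i, (p i) ^ 2) - ∑ i, (p i) ^ 3 := by
    rw [← Finset.sum_sub_distrib]; congr 1; ext i; ring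
  have h2 : ∑ i, p i * (1 - p i) = 1 - ∑ i, (p i) ^ 2 := by
    have : ∀ i : Ω, p i * (1 - p i) = p i - (p i) ^ 2 := fun i => by ring
    simp only [this]
    rw [Finset.sum_sub_distrib, hsum]
  rw [hsum] at key
  nlinarith [key, h1, h2]
end

section
/- If A, B, C are iid discrete random variables on a finite set Ω with Pr{B ≠ A} > 0, then Pr{C = B | B ≠ A} ≤ Pr{C = B}. -/
open MeasureTheory ProbabilityTheory ENNReal

theorem conditional_match_le_match {Ω' : Type*} [MeasurableSpace Ω']
    (μ : Measure Ω') [IsProbabilityMeasure μ]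
    {Ω : Type*} [Fintype Ω] [MeasurableSpace Ω] [MeasurableSingletonClass Ω]
    (X : Fin 3 → Ω' → Ω) (hmeas : ∀ i, Measurable (X i))
    (hindep : iIndepFun X μ)
    (hident : ∀ i j, IdentDistrib (X i) (X j) μ μ)
    (hpos : 0 < μ {ω | X 1 ω ≠ X 0 ω}) :
    μ {ω | X 2 ω = X 1 ω ∧ X 1 ω ≠ X 0 ω} / μ {ω | X 1 ω ≠ X 0 ω} ≤
      μ {ω | X 2 ω = X 1 ω} := by
  classical
  set p : Ω → ℝ≥0∞ := fun x => μ (X 0 ⁻¹' {x}) with hpdef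
  have hpx : ∀ (i : Fin 3) (x : Ω), μ (X i ⁻¹' {x}) = p x := fun i x =>
    (hident i 0).measure_mem_eq (measurableSet_singleton x)
  have hple : ∀ x, p x ≤ 1 := fun x => prob_le_one
  have hpne : ∀ x, p x ≠ ∞ := fun x => (lt_of_le_of_lt (hple x) ENNReal.one_lt_top).ne
  -- sum of p = 1
  have hpsum : ∑ x, p x = 1 := by
    have h1 : (⋃ x : Ω, X 0 ⁻¹' {x}) = Set.univ := by
      ext ω; simp
    have h2 := measure_iUnion (μ := μ)
      (f := fun x : Ω => X 0 ⁻¹' {x})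
      (fun x y hxy => Set.disjoint_left.2 (fun ω hx hy => hxy (by
        simp only [Set.mem_preimage, Set.mem_singleton_iff] at hx hy
        rw [← hx, ← hy])))
      (fun x => hmeas 0 (measurableSet_singleton x))
    rw [h1, measure_univ, tsum_fintype] at h2
    exact h2.symm
  -- the "match" probability
  have hmatch : ∀ i j : Fin 3, i ≠ j →
      μ {ω | X i ω = X j ω} = ∑ x, p x * p x := by
    intro i j hij
    have hset : {ω | X i ω = X j ω} = ⋃ x : Ω, (X i ⁻¹' {x} ∩ X j ⁻¹' {x}) := by
      ext ω
      simp only [Set.mem_setOf_eq, Set.mem_iUnion, Set.mem_inter_iff, Set.mem_preimage,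
        Set.mem_singleton_iff]
      exact ⟨fun h => ⟨X j ω, h, rfl⟩, fun ⟨x, h1, h2⟩ => h1.trans h2.symm⟩
    rw [hset, measure_iUnion, tsum_fintype]
    · refine Finset.sum_congr rfl fun x _ => ?_
      rw [(hindep.indepFun hij).measure_inter_preimage_eq_mul _ _
        (measurableSet_singleton x) (measurableSet_singleton x), hpx, hpx]
    · intro x y hxy
      refine Set.disjoint_left.2 fun ω hx hy => hxy ?_
      simp only [Set.mem_inter_iff, Set.mem_preimage, Set.mem_singleton_iff] at hx hy
      rw [← hx.1, ← hy.1]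
    · exact fun x => ((hmeas i) (measurableSet_singleton x)).inter
        ((hmeas j) (measurableSet_singleton x))
  -- numerator
  have hnum : μ {ω | X 2 ω = X 1 ω ∧ X 1 ω ≠ X 0 ω}
      = ∑ x, p x * p x * (1 - p x) := by
    have hset : {ω | X 2 ω = X 1 ω ∧ X 1 ω ≠ X 0 ω}
        = ⋃ x : Ω, (X 0 ⁻¹' ({x}ᶜ) ∩ X 1 ⁻¹' {x} ∩ X 2 ⁻¹' {x}) := by
      ext ω
      simp only [Set.mem_setOf_eq, Set.mem_iUnion, Set.mem_inter_iff, Set.mem_preimage,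
        Set.mem_compl_iff, Set.mem_singleton_iff]
      constructor
      · rintro ⟨h1, h2⟩
        exact ⟨X 1 ω, ⟨fun h => h2 h.symm, rfl⟩, h1⟩
      · rintro ⟨x, ⟨h0, h1⟩, h2⟩
        exact ⟨h2.trans h1.symm, fun h => h0 (by rw [← h, h1])⟩
    rw [hset, measure_iUnion, tsum_fintype]
    · refine Finset.sum_congr rfl fun x _ => ?_
      have := hindep.meas_iInter
        (s := ![X 0 ⁻¹' ({x}ᶜ), X 1 ⁻¹' {x}, X 2 ⁻¹' {x}])
        (fun i => by
          fin_cases i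
          · exact ⟨{x}ᶜ, (measurableSet_singleton x).compl, rfl⟩
          · exact ⟨{x}, measurableSet_singleton x, rfl⟩
          · exact ⟨{x}, measurableSet_singleton x, rfl⟩)
      have hInter : (⋂ i : Fin 3, ![X 0 ⁻¹' ({x}ᶜ), X 1 ⁻¹' {x}, X 2 ⁻¹' {x}] i)
          = X 0 ⁻¹' ({x}ᶜ) ∩ X 1 ⁻¹' {x} ∩ X 2 ⁻¹' {x} := by
        ext ω
        simp only [Set.mem_iInter, Set.mem_inter_iff]
        constructor
        · intro h; exact ⟨⟨h 0, h 1⟩, h 2⟩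
        · rintro ⟨⟨h0, h1⟩, h2⟩ i; fin_cases i <;> assumption
      rw [hInter] at this
      rw [this, Fin.prod_univ_three]
      simp only [Matrix.cons_val_zero, Matrix.cons_val_one, Matrix.head_cons,
        Matrix.cons_val_two, Matrix.tail_cons]
      have hc : μ (X 0 ⁻¹' ({x}ᶜ)) = 1 - p x := by
        rw [Set.preimage_compl, prob_compl_eq_one_sub (hmeas 0 (measurableSet_singleton x))]
      rw [hc, hpx, hpx]
      ring
    · intro x y hxy
      refine Set.disjoint_left.2 fun ω hx hy => hxy ?_
      simp only [Set.mem_inter_iff, Set.mem_preimage, Set.mem_singleton_iff] at hx hy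
      rw [← hx.1.2, ← hy.1.2]
    · exact fun x => (((hmeas 0) (measurableSet_singleton x).compl).inter
        ((hmeas 1) (measurableSet_singleton x))).inter
        ((hmeas 2) (measurableSet_singleton x))
  -- denominator
  have hmeasEq : MeasurableSet {ω | X 1 ω = X 0 ω} := by
    have : {ω | X 1 ω = X 0 ω} = ⋃ x : Ω, (X 1 ⁻¹' {x} ∩ X 0 ⁻¹' {x}) := by
      ext ω
      simp only [Set.mem_setOf_eq, Set.mem_iUnion, Set.mem_inter_iff, Set.mem_preimage,
        Set.mem_singleton_iff]
      exact ⟨fun h => ⟨X 0 ω, h, rfl⟩, fun ⟨x, h1, h2⟩ => h1.trans h2.symm⟩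
    rw [this]
    exact MeasurableSet.iUnion fun x => ((hmeas 1) (measurableSet_singleton x)).inter
      ((hmeas 0) (measurableSet_singleton x))
  have hden : μ {ω | X 1 ω ≠ X 0 ω} = 1 - ∑ x, p x * p x := by
    have : {ω | X 1 ω ≠ X 0 ω} = {ω | X 1 ω = X 0 ω}ᶜ := rfl
    rw [this, prob_compl_eq_one_sub hmeasEq, hmatch 1 0 (by decide)]
  set S : ℝ≥0∞ := ∑ x, p x * p x with hSdef
  have hSle : S ≤ 1 := by
    calc S ≤ ∑ x, p x := Finset.sum_le_sum fun x _ => by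
            calc p x * p x ≤ 1 * p x := mul_le_mul_left (hple x) _
            _ = p x := one_mul _
      _ = 1 := hpsum
  have hSne : S ≠ ∞ := (lt_of_le_of_lt hSle ENNReal.one_lt_top).ne
  rw [hnum, hden, hmatch 2 1 (by decide)]
  rw [hden] at hpos
  have hdne : (1 : ℝ≥0∞) - S ≠ 0 := hpos.ne'
  have hdnetop : (1 : ℝ≥0∞) - S ≠ ∞ := (lt_of_le_of_lt tsub_le_self ENNReal.one_lt_top).ne
  rw [ENNReal.div_le_iff hdne hdnetop]
  -- Key inequality, via reals
  set q : Ω → ℝ := fun x => (p x).toReal with hqdef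
  have hq0 : ∀ x, 0 ≤ q x := fun x => ENNReal.toReal_nonneg
  have hqsum : ∑ x, q x = 1 := by
    rw [hqdef]
    rw [← ENNReal.toReal_sum (fun x _ => hpne x), hpsum, ENNReal.toReal_one]
  -- Cauchy-Schwarz : (∑ q^2)^2 ≤ ∑ q^3
  have hCS : (∑ x, q x ^ 2) ^ 2 ≤ ∑ x, q x ^ 3 := by
    have := Finset.sum_mul_sq_le_sq_mul_sq Finset.univ
      (fun x => Real.sqrt (q x)) (fun x => q x * Real.sqrt (q x))
    have h1 : ∀ x : Ω, Real.sqrt (q x) * (q x * Real.sqrt (q x)) = q x ^ 2 := fun x => by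
      linear_combination q x * Real.mul_self_sqrt (hq0 x)
    have h2 : ∀ x : Ω, Real.sqrt (q x) ^ 2 = q x := fun x => Real.sq_sqrt (hq0 x)
    have h3 : ∀ x : Ω, (q x * Real.sqrt (q x)) ^ 2 = q x ^ 3 := fun x => by
      rw [mul_pow, Real.sq_sqrt (hq0 x)]; ring
    simp only [h1, h2, h3] at this
    calc (∑ x, q x ^ 2) ^ 2 ≤ (∑ x, q x) * ∑ x, q x ^ 3 := this
      _ = ∑ x, q x ^ 3 := by rw [hqsum, one_mul]
  -- transfer to ENNReal
  have hterm_ne : ∀ x : Ω, p x * p x * (1 - p x) ≠ ∞ := fun x =>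
    ENNReal.mul_ne_top (ENNReal.mul_ne_top (hpne x) (hpne x))
      (lt_of_le_of_lt tsub_le_self ENNReal.one_lt_top).ne
  have hsum_ne : (∑ x, p x * p x * (1 - p x)) ≠ ∞ :=
    (ENNReal.sum_lt_top.2 fun x _ => (hterm_ne x).lt_top).ne
  have hRHS_ne : S * (1 - S) ≠ ∞ := ENNReal.mul_ne_top hSne hdnetop
  rw [← ENNReal.toReal_le_toReal hsum_ne hRHS_ne]
  have hq2 : ∀ x : Ω, (p x * p x * (1 - p x)).toReal = q x ^ 2 * (1 - q x) := fun x => by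
    rw [ENNReal.toReal_mul, ENNReal.toReal_mul,
      ENNReal.toReal_sub_of_le (hple x) one_ne_top, ENNReal.toReal_one]
    ring
  have hStoReal : S.toReal = ∑ x, q x ^ 2 := by
    rw [hSdef, ENNReal.toReal_sum (fun x _ => ENNReal.mul_ne_top (hpne x) (hpne x))]
    exact Finset.sum_congr rfl fun x _ => by rw [ENNReal.toReal_mul]; ring
  rw [ENNReal.toReal_sum (fun x _ => hterm_ne x), ENNReal.toReal_mul,
    ENNReal.toReal_sub_of_le hSle one_ne_top, ENNReal.toReal_one, hStoReal]
  simp only [hq2]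
  have hexpand : ∑ x, q x ^ 2 * (1 - q x) = (∑ x, q x ^ 2) - ∑ x, q x ^ 3 := by
    rw [← Finset.sum_sub_distrib]
    exact Finset.sum_congr rfl fun x _ => by ring
  rw [hexpand]
  nlinarith [hCS]
end

section
/- For any probability vector (p_i)_{i∈Ω} on a finite set Ω, ∑_{i∈Ω} p_i^2(1−p_i) ≤ (∑_{i∈Ω} p_i^2)·(∑_{i∈Ω} p_i(1−p_i)). -/
theorem match_and_mismatch_le_prod {Ω : Type*} [Fintype Ω] (p : Ω → ℝ)
    (hp : ∀ i, 0 ≤ p i) (hsum : ∑ i, p i = 1) :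
    ∑ i, (p i) ^ 2 * (1 - p i) ≤ (∑ i, (p i) ^ 2) * (∑ i, p i * (1 - p i)) := by
  have key : (∑ i, (p i) ^ 2) ^ 2 ≤ (∑ i, p i) * ∑ i, (p i) ^ 3 :=
    Finset.sum_sq_le_sum_mul_sum_of_sq_eq_mul Finset.univ
      (fun i _ => hp i) (fun i _ => pow_nonneg (hp i) 3) (fun i _ => by ring)
  rw [hsum, one_mul] at key
  have h1 : ∑ i, (p i) ^ 2 * (1 - p i) = (∑ i, (p i) ^ 2) - ∑ i, (p i) ^ 3 := by
    rw [← Finset.sum_sub_distrib]; congr 1; ext i; ring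
  have h2 : ∑ i, p i * (1 - p i) = 1 - ∑ i, (p i) ^ 2 := by
    have h3 : ∑ i, p i * (1 - p i) = (∑ i, p i) - ∑ i, (p i) ^ 2 := by
      rw [← Finset.sum_sub_distrib]; congr 1; ext i; ring
    rw [h3, hsum]
  rw [h1, h2]
  nlinarith [key]
end
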